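/- Let A, B, C, D be points in the Euclidean plane with A ≠ B and C ≠ D, such that ‖A − D‖ = ‖B − C‖ = ‖(A+B)/2 − (D+C)/2‖. Then A − B = D − C. -/
import Mathlib

/-- If `A ≠ B`, `C ≠ D` and `‖A − D‖ = ‖B − C‖ = ‖(A+B)/2 − (D+C)/2‖`,
then `A − B = D − C` (the quadrilateral is a parallelogram). -/
theorem parallelogram_of_dist_eq_midpoint_dist (A B C D : ℂ)
    (hAB : A ≠ B) (hCD : C ≠ D)
    (h1 : ‖A - D‖ = ‖B - C‖)
    (h2 : ‖B - C‖ = ‖(A + B) / 2 - (D + C) / 2‖) :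
    A - B = D - C := by
  set u := A - D with hu
  set v := B - C with hv
  have hm : (A + B) / 2 - (D + C) / 2 = (u + v) / 2 := by rw [hu, hv]; ring
  rw [hm] at h2
  have h2' : ‖u + v‖ = 2 * ‖u‖ := by
    have : ‖(u + v) / 2‖ = ‖u + v‖ / 2 := by
      rw [norm_div]; norm_num
    rw [this] at h2
    rw [h1] at *
    linarith [h2]
  have hpar := parallelogram_law_with_norm ℝ u v
  have hvu : ‖v‖ = ‖u‖ := h1.symm
  rw [hvu, h2'] at hpar
  have hz : ‖u - v‖ = 0 := by nlinarith [norm_nonneg (u - v), norm_nonneg u]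
  have huv : u = v := sub_eq_zero.mp (norm_eq_zero.mp hz)
  rw [hu, hv] at huv
  linear_combination huv
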